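/- arXiv:1605.04893 — 2 statements merged into one kernel-verified Lean document; each statement's English description precedes it below -/
import Mathlib

section
/- Let A be an n×n Hermitian positive semi-definite matrix and Q an n×ℓ matrix with orthonormal columns. Then det(I_ℓ + Q* A Q) ≤ det(I_n + A), and hence log det(I_ℓ + Q* A Q) ≤ log det(I_n + A). -/
open Matrix
open scoped ComplexOrder

/-- Eigenvalues of a PSD contraction are at most 1. -/
lemma aux_eigenvalue_le_one {n : ℕ} {W : Matrix (Fin n) (Fin n) ℂ} (hW : W.PosSemidef)
    (h1 : ((1 : Matrix (Fin n) (Fin n) ℂ) - W).PosSemidef) (i : Fin n) :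
    hW.1.eigenvalues i ≤ 1 := by
  set v := hW.1.eigenvectorBasis i with hv
  have hnorm : (starRingEnd ℂ) 1 * (1 : ℂ) = 1 := by simp
  have hvv : star (⇑v) ⬝ᵥ (⇑v) = 1 := by
    have h2 : (inner ℂ v v : ℂ) = 1 := by
      rw [inner_self_eq_norm_sq_to_K, hW.1.eigenvectorBasis.orthonormal.1 i]; norm_num
    rw [EuclideanSpace.inner_eq_star_dotProduct] at h2
    rwa [dotProduct_comm] at h2
  have key := h1.re_dotProduct_nonneg (⇑v)
  have hmv : W *ᵥ (⇑v) = hW.1.eigenvalues i • (⇑v) := hW.1.mulVec_eigenvectorBasis i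
  rw [sub_mulVec, one_mulVec, dotProduct_sub, hmv] at key
  have hsm : star (⇑v) ⬝ᵥ (hW.1.eigenvalues i • ⇑v)
      = (hW.1.eigenvalues i : ℂ) := by
    rw [dotProduct_smul, hvv]
    simp [RCLike.real_smul_eq_coe_mul]
  rw [hvv, hsm] at key
  have hre : RCLike.re ((1 : ℂ) - (hW.1.eigenvalues i : ℂ)) = 1 - hW.1.eigenvalues i := by
    simp
  rw [hre] at key
  linarith

/-- The real part of the determinant of a PSD contraction is at most 1. -/
lemma aux_det_re_le_one {n : ℕ} {W : Matrix (Fin n) (Fin n) ℂ} (hW : W.PosSemidef)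
    (h1 : ((1 : Matrix (Fin n) (Fin n) ℂ) - W).PosSemidef) : (W.det).re ≤ 1 := by
  have hdet := hW.1.det_eq_prod_eigenvalues
  have : W.det = ((∏ i, hW.1.eigenvalues i : ℝ) : ℂ) := by
    rw [hdet]; push_cast; rfl
  rw [this, Complex.ofReal_re]
  refine Finset.prod_le_one (fun i _ => hW.eigenvalues_nonneg i)
    (fun i _ => aux_eigenvalue_le_one hW h1 i)

open scoped MatrixOrder in
/-- Monotonicity of the determinant with respect to the Loewner order. -/
lemma aux_det_mono {n : ℕ} {X Y : Matrix (Fin n) (Fin n) ℂ} (hX : X.PosSemidef)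
    (hY : Y.PosDef) (hXY : (Y - X).PosSemidef) : (X.det).re ≤ (Y.det).re := by
  set S := CFC.sqrt Y with hSdef
  have hS : S.PosSemidef := (CFC.sqrt_nonneg Y).posSemidef
  have hSS : S * S = Y := CFC.sqrt_mul_sqrt_self Y hY.posSemidef.nonneg
  have hSH : Sᴴ = S := hS.1
  have hdetY : (0 : ℂ) < Y.det := hY.det_pos
  have hdetS2 : S.det * S.det = Y.det := by rw [← det_mul, hSS]
  have hdetS : IsUnit S.det := by
    have : S.det ≠ 0 := by
      intro h
      rw [h, zero_mul] at hdetS2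
      exact hdetY.ne' hdetS2.symm
    exact this.isUnit
  have hSiH : (S⁻¹)ᴴ = S⁻¹ := by rw [conjTranspose_nonsing_inv, hSH]
  have hinvS : S⁻¹ * S = 1 := nonsing_inv_mul S hdetS
  have hSinv : S * S⁻¹ = 1 := mul_nonsing_inv S hdetS
  set W := S⁻¹ * X * (S⁻¹)ᴴ with hWdef
  have hW : W.PosSemidef := hX.mul_mul_conjTranspose_same S⁻¹
  have hY1 : S⁻¹ * Y * (S⁻¹)ᴴ = 1 := by
    rw [hSiH, ← hSS, ← mul_assoc, mul_assoc (S⁻¹ * S), hinvS, one_mul, hSinv]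
  have h1W : ((1 : Matrix (Fin n) (Fin n) ℂ) - W).PosSemidef := by
    have := hXY.mul_mul_conjTranspose_same S⁻¹
    have heq : S⁻¹ * (Y - X) * (S⁻¹)ᴴ = 1 - W := by
      rw [Matrix.mul_sub, Matrix.sub_mul, hY1, hWdef]
    rwa [heq] at this
  have hXW : X = S * W * S := by
    rw [hWdef, hSiH, ← mul_assoc, ← mul_assoc, hSinv, one_mul, mul_assoc, hinvS, mul_one]
  have hdetX : X.det = Y.det * W.det := by
    rw [hXW, det_mul, det_mul, ← hdetS2]; ring
  obtain ⟨hre, him⟩ := Complex.lt_def.mp hdetY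
  simp only [Complex.zero_re, Complex.zero_im] at hre him
  have hWre := aux_det_re_le_one hW h1W
  rw [hdetX]
  have : (Y.det * W.det).re = Y.det.re * W.det.re := by
    rw [Complex.mul_re, ← him, zero_mul, sub_zero]
  rw [this]
  nlinarith

/-- If `A` is Hermitian positive semi-definite and `Q` has orthonormal columns, then
`det(I_ℓ + Qᴴ A Q) ≤ det(I_n + A)`, and hence
`log det(I_ℓ + Qᴴ A Q) ≤ log det(I_n + A)`. -/
theorem det_compression_le {n ℓ : ℕ}
    (A : Matrix (Fin n) (Fin n) ℂ) (hA : A.PosSemidef)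
    (Q : Matrix (Fin n) (Fin ℓ) ℂ) (hQ : Qᴴ * Q = 1) :
    (((1 : Matrix (Fin ℓ) (Fin ℓ) ℂ) + Qᴴ * A * Q).det).re ≤
      (((1 : Matrix (Fin n) (Fin n) ℂ) + A).det).re ∧
    Real.log (((1 : Matrix (Fin ℓ) (Fin ℓ) ℂ) + Qᴴ * A * Q).det).re ≤
      Real.log (((1 : Matrix (Fin n) (Fin n) ℂ) + A).det).re := by
  open scoped MatrixOrder in set B := CFC.sqrt A with hBdef
  open scoped MatrixOrder in have hB : B.PosSemidef := (CFC.sqrt_nonneg A).posSemidef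
  have hBH : Bᴴ = B := hB.1
  open scoped MatrixOrder in have hBB : B * B = A := CFC.sqrt_mul_sqrt_self A hA.nonneg
  set M := B * Q with hMdef
  -- Qᴴ A Q = Mᴴ M
  have hQAQ : Qᴴ * A * Q = Mᴴ * M := by
    rw [hMdef, conjTranspose_mul, hBH, ← hBB]
    simp only [Matrix.mul_assoc]
  -- Sylvester
  have hSyl : ((1 : Matrix (Fin ℓ) (Fin ℓ) ℂ) + Mᴴ * M).det
      = ((1 : Matrix (Fin n) (Fin n) ℂ) + M * Mᴴ).det :=
    det_one_add_mul_comm Mᴴ M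
  set X := M * Mᴴ with hXdef
  have hX : X.PosSemidef := posSemidef_self_mul_conjTranspose M
  -- A - X is PSD
  have hP : ((1 : Matrix (Fin n) (Fin n) ℂ) - Q * Qᴴ).PosSemidef := by
    have hproj : ((1 : Matrix (Fin n) (Fin n) ℂ) - Q * Qᴴ)ᴴ
        * ((1 : Matrix (Fin n) (Fin n) ℂ) - Q * Qᴴ)
        = (1 : Matrix (Fin n) (Fin n) ℂ) - Q * Qᴴ := by
      have hPP : (Q * Qᴴ) * (Q * Qᴴ) = Q * Qᴴ := by
        rw [Matrix.mul_assoc, ← Matrix.mul_assoc Qᴴ, hQ, Matrix.one_mul]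
      rw [conjTranspose_sub, conjTranspose_one, conjTranspose_mul, conjTranspose_conjTranspose]
      simp only [Matrix.sub_mul, Matrix.mul_sub, Matrix.one_mul, Matrix.mul_one, hPP]
      abel
    rw [← hproj]
    exact posSemidef_conjTranspose_mul_self _
  have hAX : (A - X).PosSemidef := by
    have := hP.mul_mul_conjTranspose_same B
    have heq : B * ((1 : Matrix (Fin n) (Fin n) ℂ) - Q * Qᴴ) * Bᴴ = A - X := by
      rw [hBH, Matrix.mul_sub, Matrix.sub_mul, Matrix.mul_one, hBB, hXdef, hMdef,
        conjTranspose_mul, hBH]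
      simp only [Matrix.mul_assoc]
    rwa [heq] at this
  -- positivity facts
  have hY : ((1 : Matrix (Fin n) (Fin n) ℂ) + A).PosDef :=
    Matrix.PosDef.add_posSemidef Matrix.PosDef.one hA
  have h1X : ((1 : Matrix (Fin n) (Fin n) ℂ) + X).PosSemidef :=
    Matrix.PosSemidef.add (Matrix.PosDef.one).posSemidef hX
  have hsub : (((1 : Matrix (Fin n) (Fin n) ℂ) + A)
      - ((1 : Matrix (Fin n) (Fin n) ℂ) + X)).PosSemidef := by
    have : ((1 : Matrix (Fin n) (Fin n) ℂ) + A) - ((1 : Matrix (Fin n) (Fin n) ℂ) + X)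
        = A - X := by abel
    rwa [this]
  have hmain : (((1 : Matrix (Fin ℓ) (Fin ℓ) ℂ) + Qᴴ * A * Q).det).re ≤
      (((1 : Matrix (Fin n) (Fin n) ℂ) + A).det).re := by
    rw [hQAQ, hSyl]
    exact aux_det_mono h1X hY hsub
  refine ⟨hmain, ?_⟩
  -- positivity of the small determinant
  have hQAQpsd : (Qᴴ * A * Q).PosSemidef := hA.conjTranspose_mul_mul_same Q
  have hsmall : ((1 : Matrix (Fin ℓ) (Fin ℓ) ℂ) + Qᴴ * A * Q).PosDef :=
    Matrix.PosDef.add_posSemidef Matrix.PosDef.one hQAQpsd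
  have hdpos : (0 : ℂ) < ((1 : Matrix (Fin ℓ) (Fin ℓ) ℂ) + Qᴴ * A * Q).det :=
    hsmall.det_pos
  obtain ⟨hre, -⟩ := Complex.lt_def.mp hdpos
  simp only [Complex.zero_re] at hre
  exact Real.log_le_log hre hmain
end

section
/- Let A be an n×n Hermitian positive semi-definite matrix with eigenvalues λ_1 ≥ ... ≥ λ_n ≥ 0, let k ≤ ℓ ≤ n, and let Q be an n×ℓ matrix with orthonormal columns. Then log det(I_n + A) − log det(I_ℓ + Q* A Q) ≥ ∑_{j=k+1}^{n} log(1 + λ_j) − ∑_{j=k+1}^{ℓ} log(1 + λ_j) ≥ 0. -/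
open Matrix Finset
open scoped ComplexOrder


private lemma det_mul_expand {R : Type*} [CommRing R] {l n : ℕ}
    (A : Matrix (Fin l) (Fin n) R) (B : Matrix (Fin n) (Fin l) R) :
    (A * B).det = ∑ f : Fin l → Fin n, (∏ i, A i (f i)) * (B.submatrix f id).det := by
  have h1 : (A * B).det
      = Matrix.detRowAlternating (fun i => ∑ k : Fin n, A i k • B k) := by
    congr 1
    ext i j
    simp [Matrix.mul_apply, Finset.sum_apply]
  rw [h1]
  rw [show (Matrix.detRowAlternating (fun i => ∑ k : Fin n, A i k • B k) : R)
      = Matrix.detRowAlternating.toMultilinearMap (fun i => ∑ k : Fin n, A i k • B k) from rfl,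
    MultilinearMap.map_sum]
  refine Finset.sum_congr rfl fun f _ => ?_
  have h2 := Matrix.detRowAlternating.toMultilinearMap.map_smul_univ
      (fun i => A i (f i)) (fun i => B (f i))
  simp [smul_eq_mul] at h2 ⊢
  exact h2


private lemma image_card_eq {l n : ℕ} {f : Fin l → Fin n} (hf : Function.Injective f) :
    (Finset.univ.image f).card = l := by
  rw [Finset.card_image_of_injective _ hf, Finset.card_univ, Fintype.card_fin]

open scoped Classical in
private noncomputable def sortOf {l n : ℕ} (f : Fin l → Fin n) :
    (Fin l → Fin n) × (Fin l → Fin l) :=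
  if hf : Function.Injective f then
    ((fun i => (Finset.univ.image f).orderEmbOfFin (image_card_eq hf) i),
     (fun i => ((Finset.univ.image f).orderIsoOfFin (image_card_eq hf)).symm
        ⟨f i, by simp [Finset.mem_image]⟩))
  else (f, id)

private lemma sortOf_comp {l n : ℕ} {f : Fin l → Fin n} (hf : Function.Injective f) :
    (sortOf f).1 ∘ (sortOf f).2 = f := by
  classical
  funext i
  simp only [sortOf, dif_pos hf, Function.comp_apply]
  rw [← Finset.coe_orderIsoOfFin_apply]
  simp

private lemma sortOf_strictMono {l n : ℕ} {f : Fin l → Fin n} (hf : Function.Injective f) :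
    StrictMono (sortOf f).1 := by
  classical
  simp only [sortOf, dif_pos hf]
  exact ((Finset.univ.image f).orderEmbOfFin (image_card_eq hf)).strictMono

private lemma sortOf_injective {l n : ℕ} {f : Fin l → Fin n} (hf : Function.Injective f) :
    Function.Injective (sortOf f).2 := by
  classical
  simp only [sortOf, dif_pos hf]
  intro i j h
  have := congrArg (Subtype.val ∘ ((Finset.univ.image f).orderIsoOfFin (image_card_eq hf))) h
  simp only [Function.comp_apply, OrderIso.apply_symm_apply] at this
  exact hf this

private lemma sortOf_eq {l n : ℕ} {g : Fin l → Fin n} {h : Fin l → Fin l}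
    (hg : StrictMono g) (hh : Function.Injective h) :
    sortOf (g ∘ h) = (g, h) := by
  classical
  have hinj : Function.Injective (g ∘ h) := hg.injective.comp hh
  have hsurj : Function.Surjective h := Finite.surjective_of_injective hh
  have himg : Finset.univ.image (g ∘ h) = Finset.univ.image g := by
    rw [← Finset.image_image, Finset.image_univ_of_surjective hsurj]
  have h1 : (sortOf (g ∘ h)).1 = g := by
    have hmem : ∀ x, g x ∈ Finset.univ.image (g ∘ h) := by
      intro x; rw [himg]; simp [Finset.mem_image]
    have := Finset.orderEmbOfFin_unique (image_card_eq hinj) hmem hg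
    simp only [sortOf, dif_pos hinj]
    exact this.symm
  have h2 : (sortOf (g ∘ h)).2 = h := by
    have hc := sortOf_comp hinj
    rw [h1] at hc
    funext i
    exact hg.injective (congrFun hc i)
  exact Prod.ext h1 h2

open scoped Classical in
private theorem cauchy_binet {R : Type*} [CommRing R] {l n : ℕ} (A : Matrix (Fin l) (Fin n) R) (B : Matrix (Fin n) (Fin l) R) :
    (A * B).det = ∑ g ∈ Finset.univ.filter (fun g : Fin l → Fin n => StrictMono g),
      ((A.submatrix id g) * (B.submatrix g id)).det := by
  classical
  rw [det_mul_expand]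
  rw [← Finset.sum_filter_add_sum_filter_not Finset.univ
      (fun f : Fin l → Fin n => Function.Injective f)]
  have h2 : ∑ f ∈ Finset.univ.filter (fun f : Fin l → Fin n => ¬ Function.Injective f),
      (∏ i, A i (f i)) * (B.submatrix f id).det = 0 := by
    refine Finset.sum_eq_zero fun f hf => ?_
    simp only [Finset.mem_filter] at hf
    obtain ⟨i, j, hfij, hij⟩ := Function.not_injective_iff.mp hf.2
    have hz : (B.submatrix f id).det = 0 :=
      Matrix.det_zero_of_row_eq hij (funext fun t => by simp [hfij])
    rw [hz, mul_zero]
  rw [h2, add_zero]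
  have key : ∑ f ∈ Finset.univ.filter (fun f : Fin l → Fin n => Function.Injective f),
      (∏ i, A i (f i)) * (B.submatrix f id).det
      = ∑ p ∈ (Finset.univ.filter (fun g : Fin l → Fin n => StrictMono g)) ×ˢ
          (Finset.univ.filter (fun h : Fin l → Fin l => Function.Injective h)),
        (∏ i, A i (p.1 (p.2 i))) * (B.submatrix (p.1 ∘ p.2) id).det := by
    refine Finset.sum_nbij' sortOf (fun p => p.1 ∘ p.2) ?_ ?_ ?_ ?_ ?_
    · intro f hf
      simp only [Finset.mem_filter, Finset.mem_univ, true_and] at hf ⊢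
      rw [Finset.mem_product]
      exact ⟨by simp [sortOf_strictMono hf], by simp [sortOf_injective hf]⟩
    · intro p hp
      simp only [Finset.mem_product, Finset.mem_filter, Finset.mem_univ, true_and] at hp
      simp only [Finset.mem_filter, Finset.mem_univ, true_and]
      exact hp.1.injective.comp hp.2
    · intro f hf
      simp only [Finset.mem_filter, Finset.mem_univ, true_and] at hf
      exact sortOf_comp hf
    · intro p hp
      simp only [Finset.mem_product, Finset.mem_filter, Finset.mem_univ, true_and] at hp
      exact sortOf_eq hp.1 hp.2
    · intro f hf
      simp only [Finset.mem_filter, Finset.mem_univ, true_and] at hf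
      have hcomp := sortOf_comp hf
      have hpt : ∀ i, (sortOf f).1 ((sortOf f).2 i) = f i := fun i => congrFun hcomp i
      rw [hcomp]
      simp only [hpt]
  rw [key, Finset.sum_product]
  refine Finset.sum_congr rfl fun g hg => ?_
  simp only [Finset.mem_filter, Finset.mem_univ, true_and] at hg
  rw [det_mul_expand]
  rw [← Finset.sum_filter_add_sum_filter_not Finset.univ
      (fun h : Fin l → Fin l => Function.Injective h)]
  have h3 : ∑ h ∈ Finset.univ.filter (fun h : Fin l → Fin l => ¬ Function.Injective h),
      (∏ i, (A.submatrix id g) i (h i)) * (((B.submatrix g id)).submatrix h id).det = 0 := by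
    refine Finset.sum_eq_zero fun h hh => ?_
    simp only [Finset.mem_filter] at hh
    obtain ⟨i, j, hfij, hij⟩ := Function.not_injective_iff.mp hh.2
    have hz : (((B.submatrix g id)).submatrix h id).det = 0 :=
      Matrix.det_zero_of_row_eq hij (funext fun t => by simp [hfij])
    rw [hz, mul_zero]
  rw [h3, add_zero]
  refine Finset.sum_congr rfl fun h hh => ?_
  rw [Matrix.submatrix_submatrix]
  simp [Function.comp_def]

private lemma strictMono_val_le {l n : ℕ} {g : Fin l → Fin n} (hg : StrictMono g) (j : Fin l) :
    (j : ℕ) ≤ (g j : ℕ) := by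
  have key : ∀ m : ℕ, ∀ h : m < l, m ≤ (g ⟨m, h⟩ : ℕ) := by
    intro m
    induction m with
    | zero => intro h; exact Nat.zero_le _
    | succ p ih =>
      intro h
      have hp : p < l := Nat.lt_of_succ_lt h
      have h1 := ih hp
      have h2 : g ⟨p, hp⟩ < g ⟨p + 1, h⟩ := hg (by simp [Fin.lt_def])
      have h3 := Fin.lt_def.mp h2
      omega
  have := key j.1 j.2
  simpa using this


private lemma compression_bounds {n ℓ : ℕ} (hℓn : ℓ ≤ n)
    (ev : Fin n → ℝ) (hanti : Antitone ev) (hnonneg : ∀ i, 0 ≤ ev i)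
    (W : Matrix (Fin n) (Fin ℓ) ℂ) (hWW : Wᴴ * W = 1)
    (C : Matrix (Fin n) (Fin n) ℂ) (hCdef : C = Matrix.diagonal (fun i => ((1 + ev i : ℝ) : ℂ))) :
    1 ≤ ((Wᴴ * C * W).det).re ∧
      ((Wᴴ * C * W).det).re ≤ ∏ j : Fin ℓ, (1 + ev (Fin.castLE hℓn j)) := by
  classical
  have hsub : ∀ g : Fin ℓ → Fin n, (Wᴴ * C).submatrix id g
      = (W.submatrix g id)ᴴ * Matrix.diagonal (fun j => ((1 + ev (g j) : ℝ) : ℂ)) := by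
    intro g
    ext i j
    simp [hCdef, Matrix.mul_diagonal, Matrix.conjTranspose_apply, Matrix.submatrix_apply]
  have hterm : ∀ g : Fin ℓ → Fin n,
      ((Wᴴ * C).submatrix id g * W.submatrix g id).det
      = (((∏ j, (1 + ev (g j))) * Complex.normSq (W.submatrix g id).det : ℝ) : ℂ) := by
    intro g
    rw [hsub g, Matrix.det_mul, Matrix.det_mul, Matrix.det_conjTranspose, Matrix.det_diagonal]
    set dd := (W.submatrix g id).det with hdd
    have hsd : dd * star dd = ((Complex.normSq dd : ℝ) : ℂ) := by
      rw [Complex.star_def, Complex.mul_conj]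
    push_cast
    linear_combination (∏ x : Fin ℓ, (1 + (ev (g x) : ℂ))) * hsd
  have hsub1 : ∀ g : Fin ℓ → Fin n, Wᴴ.submatrix id g = (W.submatrix g id)ᴴ := by
    intro g; ext i j; simp [Matrix.conjTranspose_apply, Matrix.submatrix_apply]
  have hterm1 : ∀ g : Fin ℓ → Fin n,
      (Wᴴ.submatrix id g * W.submatrix g id).det
      = ((Complex.normSq (W.submatrix g id).det : ℝ) : ℂ) := by
    intro g
    rw [hsub1 g, Matrix.det_mul, Matrix.det_conjTranspose]
    rw [mul_comm, Complex.star_def, Complex.mul_conj]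
  -- the two Cauchy–Binet identities
  have key1 : ((Wᴴ * C * W).det)
      = ((∑ g ∈ Finset.univ.filter (fun g : Fin ℓ → Fin n => StrictMono g),
          (∏ j, (1 + ev (g j))) * Complex.normSq (W.submatrix g id).det : ℝ) : ℂ) := by
    rw [cauchy_binet (Wᴴ * C) W]
    rw [Finset.sum_congr rfl fun g _ => hterm g]
    push_cast
    ring
  have key0 : (∑ g ∈ Finset.univ.filter (fun g : Fin ℓ → Fin n => StrictMono g),
      Complex.normSq (W.submatrix g id).det) = 1 := by
    have h0 : ((1 : Matrix (Fin ℓ) (Fin ℓ) ℂ)).det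
        = ((∑ g ∈ Finset.univ.filter (fun g : Fin ℓ → Fin n => StrictMono g),
          Complex.normSq (W.submatrix g id).det : ℝ) : ℂ) := by
      rw [← hWW, cauchy_binet Wᴴ W, Finset.sum_congr rfl fun g _ => hterm1 g]
      push_cast
      ring
    rw [Matrix.det_one] at h0
    exact_mod_cast h0.symm
  have hre : ((Wᴴ * C * W).det).re
      = ∑ g ∈ Finset.univ.filter (fun g : Fin ℓ → Fin n => StrictMono g),
          (∏ j, (1 + ev (g j))) * Complex.normSq (W.submatrix g id).det := by
    rw [key1, Complex.ofReal_re]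
  have hc1 : ∀ i : Fin n, (1 : ℝ) ≤ 1 + ev i := fun i => by linarith [hnonneg i]
  have hp1 : ∀ g : Fin ℓ → Fin n, (1 : ℝ) ≤ ∏ j, (1 + ev (g j)) := by
    intro g
    calc (1 : ℝ) = ∏ _j : Fin ℓ, (1 : ℝ) := by rw [Finset.prod_const_one]
      _ ≤ ∏ j, (1 + ev (g j)) :=
        Finset.prod_le_prod (fun j _ => zero_le_one) (fun j _ => hc1 (g j))
  have hpm : ∀ g : Fin ℓ → Fin n, StrictMono g →
      (∏ j, (1 + ev (g j))) ≤ ∏ j : Fin ℓ, (1 + ev (Fin.castLE hℓn j)) := by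
    intro g hg
    refine Finset.prod_le_prod (fun j _ => by linarith [hc1 (g j)]) (fun j _ => ?_)
    have hle : (Fin.castLE hℓn j : Fin n) ≤ g j := by
      rw [Fin.le_def]
      simpa using strictMono_val_le hg j
    linarith [hanti hle]
  constructor
  · rw [hre]
    have hmono : ∑ g ∈ Finset.univ.filter (fun g : Fin ℓ → Fin n => StrictMono g),
        Complex.normSq (W.submatrix g id).det
        ≤ ∑ g ∈ Finset.univ.filter (fun g : Fin ℓ → Fin n => StrictMono g),
        (∏ j, (1 + ev (g j))) * Complex.normSq (W.submatrix g id).det :=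
      Finset.sum_le_sum fun g _ => le_mul_of_one_le_left (Complex.normSq_nonneg _) (hp1 g)
    linarith [key0]
  · rw [hre]
    calc (∑ g ∈ Finset.univ.filter (fun g : Fin ℓ → Fin n => StrictMono g),
          (∏ j, (1 + ev (g j))) * Complex.normSq (W.submatrix g id).det)
        ≤ ∑ g ∈ Finset.univ.filter (fun g : Fin ℓ → Fin n => StrictMono g),
          (∏ j : Fin ℓ, (1 + ev (Fin.castLE hℓn j))) * Complex.normSq (W.submatrix g id).det := by
          refine Finset.sum_le_sum fun g hg => ?_
          simp only [Finset.mem_filter] at hg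
          exact mul_le_mul_of_nonneg_right (hpm g hg.2) (Complex.normSq_nonneg _)
      _ = ∏ j : Fin ℓ, (1 + ev (Fin.castLE hℓn j)) := by
          rw [← Finset.mul_sum, key0, mul_one]

private lemma log_assembly {n ℓ k : ℕ} (hk : 1 ≤ k) (hkℓ : k ≤ ℓ) (hℓn : ℓ ≤ n)
    (ev : Fin n → ℝ) (hnonneg : ∀ i, 0 ≤ ev i)
    (X : ℝ) (hX1 : 1 ≤ X) (hXm : X ≤ ∏ j : Fin ℓ, (1 + ev (Fin.castLE hℓn j))) :
    Real.log (∏ i, (1 + ev i)) - Real.log X ≥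
      (∑ j ∈ Finset.univ.filter (fun j : Fin n => k ≤ (j : ℕ)), Real.log (1 + ev j)) -
      (∑ j ∈ Finset.univ.filter (fun j : Fin n => k ≤ (j : ℕ) ∧ (j : ℕ) < ℓ),
        Real.log (1 + ev j)) ∧
    (∑ j ∈ Finset.univ.filter (fun j : Fin n => k ≤ (j : ℕ)), Real.log (1 + ev j)) -
      (∑ j ∈ Finset.univ.filter (fun j : Fin n => k ≤ (j : ℕ) ∧ (j : ℕ) < ℓ),
        Real.log (1 + ev j)) ≥ 0 := by
  classical
  have hc1 : ∀ i : Fin n, (1 : ℝ) ≤ 1 + ev i := fun i => by linarith [hnonneg i]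
  have hcpos : ∀ i : Fin n, (0 : ℝ) < 1 + ev i := fun i => lt_of_lt_of_le one_pos (hc1 i)
  set m : ℝ := ∏ j : Fin ℓ, (1 + ev (Fin.castLE hℓn j)) with hmdef
  have hm0 : 0 < m := Finset.prod_pos fun j _ => hcpos _
  have hlogXm : Real.log X ≤ Real.log m :=
    (Real.log_le_log_iff (by linarith) hm0).mpr hXm
  have hlogfull : Real.log (∏ i, (1 + ev i)) = ∑ i, Real.log (1 + ev i) :=
    Real.log_prod fun i _ => ne_of_gt (hcpos i)
  have hlogm : Real.log m = ∑ j : Fin ℓ, Real.log (1 + ev (Fin.castLE hℓn j)) :=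
    Real.log_prod fun j _ => ne_of_gt (hcpos _)
  -- reindex the < ℓ part
  have hfilterimg : Finset.univ.filter (fun i : Fin n => (i : ℕ) < ℓ)
      = Finset.univ.image (Fin.castLE hℓn) := by
    ext i
    simp only [Finset.mem_filter, Finset.mem_univ, true_and, Finset.mem_image]
    constructor
    · intro h; exact ⟨⟨i.1, h⟩, rfl⟩
    · rintro ⟨a, rfl⟩; exact a.2
  have hsumcast : ∑ i ∈ Finset.univ.filter (fun i : Fin n => (i : ℕ) < ℓ),
      Real.log (1 + ev i) = ∑ j : Fin ℓ, Real.log (1 + ev (Fin.castLE hℓn j)) := by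
    rw [hfilterimg, Finset.sum_image (fun a _ b _ h => Fin.castLE_injective hℓn h)]
  have hsplitfull := Finset.sum_filter_add_sum_filter_not Finset.univ
    (fun i : Fin n => (i : ℕ) < ℓ) (fun i => Real.log (1 + ev i))
  have hnotlt : Finset.univ.filter (fun i : Fin n => ¬ (i : ℕ) < ℓ)
      = Finset.univ.filter (fun i : Fin n => ℓ ≤ (i : ℕ)) := by
    ext i; simp [not_lt]
  have hsplitR := Finset.sum_filter_add_sum_filter_not
    (Finset.univ.filter (fun j : Fin n => k ≤ (j : ℕ)))
    (fun j : Fin n => (j : ℕ) < ℓ) (fun j => Real.log (1 + ev j))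
  rw [Finset.filter_filter, Finset.filter_filter] at hsplitR
  have hR2 : Finset.univ.filter (fun j : Fin n => k ≤ (j : ℕ) ∧ ¬ (j : ℕ) < ℓ)
      = Finset.univ.filter (fun j : Fin n => ℓ ≤ (j : ℕ)) := by
    ext j; simp only [Finset.mem_filter, Finset.mem_univ, true_and, not_lt]
    omega
  rw [hR2] at hsplitR
  have htail0 : 0 ≤ ∑ j ∈ Finset.univ.filter (fun j : Fin n => ℓ ≤ (j : ℕ)),
      Real.log (1 + ev j) :=
    Finset.sum_nonneg fun j _ => Real.log_nonneg (hc1 j)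
  rw [hnotlt, hsumcast] at hsplitfull
  constructor
  · rw [hlogfull, ← hsplitfull, ← hlogm]
    linarith [hsplitR]
  · linarith [hsplitR]

/-- Lower bound for the logdet deficit of a compression: with decreasing eigenvalues
`ev` of `A` (0-based, so 1-based `λ_j = ev (j-1)`), `k ≤ ℓ ≤ n`, and `Q` with
orthonormal columns:
`log det(I_n + A) − log det(I_ℓ + Qᴴ A Q) ≥ ∑_{j=k+1}^{n} log(1+λ_j) − ∑_{j=k+1}^{ℓ} log(1+λ_j) ≥ 0`. -/
theorem logdet_compression_lower_bound {n ℓ k : ℕ} (hk : 1 ≤ k) (hkℓ : k ≤ ℓ) (hℓn : ℓ ≤ n)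
    (A : Matrix (Fin n) (Fin n) ℂ) (hA : A.PosSemidef)
    (ev : Fin n → ℝ) (hanti : Antitone ev) (hnonneg : ∀ i, 0 ≤ ev i)
    (U : Matrix.unitaryGroup (Fin n) ℂ)
    (hspec : A = (U : Matrix (Fin n) (Fin n) ℂ) * Matrix.diagonal (fun i => (ev i : ℂ)) *
      star (U : Matrix (Fin n) (Fin n) ℂ))
    (Q : Matrix (Fin n) (Fin ℓ) ℂ) (hQ : Qᴴ * Q = 1) :
    Real.log (((1 : Matrix (Fin n) (Fin n) ℂ) + A).det).re -
      Real.log (((1 : Matrix (Fin ℓ) (Fin ℓ) ℂ) + Qᴴ * A * Q).det).re ≥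
      (∑ j ∈ Finset.univ.filter (fun j : Fin n => k ≤ (j : ℕ)), Real.log (1 + ev j)) -
      (∑ j ∈ Finset.univ.filter (fun j : Fin n => k ≤ (j : ℕ) ∧ (j : ℕ) < ℓ),
        Real.log (1 + ev j)) ∧
    (∑ j ∈ Finset.univ.filter (fun j : Fin n => k ≤ (j : ℕ)), Real.log (1 + ev j)) -
      (∑ j ∈ Finset.univ.filter (fun j : Fin n => k ≤ (j : ℕ) ∧ (j : ℕ) < ℓ),
        Real.log (1 + ev j)) ≥ 0 := by
  classical
  set C : Matrix (Fin n) (Fin n) ℂ := Matrix.diagonal (fun i => ((1 + ev i : ℝ) : ℂ)) with hCdef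
  have hCsplit : C = 1 + Matrix.diagonal (fun i => (ev i : ℂ)) := by
    rw [hCdef, show (fun i : Fin n => ((1 + ev i : ℝ) : ℂ)) = fun i => 1 + (ev i : ℂ) from
      funext fun i => by push_cast; ring, ← Matrix.diagonal_one, ← Matrix.diagonal_add]
  set W : Matrix (Fin n) (Fin ℓ) ℂ := star (U : Matrix (Fin n) (Fin n) ℂ) * Q with hWdef
  have hUs : (U : Matrix (Fin n) (Fin n) ℂ) * star (U : Matrix (Fin n) (Fin n) ℂ) = 1 :=
    U.2.2
  have hWH : Wᴴ = Qᴴ * (U : Matrix (Fin n) (Fin n) ℂ) := by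
    rw [hWdef, Matrix.conjTranspose_mul, Matrix.star_eq_conjTranspose,
      Matrix.conjTranspose_conjTranspose]
  have hWW : Wᴴ * W = 1 := by
    rw [hWH, hWdef, Matrix.mul_assoc, ← Matrix.mul_assoc (U : Matrix (Fin n) (Fin n) ℂ), hUs,
      Matrix.one_mul, hQ]
  have hA1 : (1 : Matrix (Fin n) (Fin n) ℂ) + A =
      (U : Matrix (Fin n) (Fin n) ℂ) * C * star (U : Matrix (Fin n) (Fin n) ℂ) := by
    rw [hCsplit, hspec, Matrix.mul_add, Matrix.add_mul, Matrix.mul_one, hUs]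
  have hdet1 : ((1 : Matrix (Fin n) (Fin n) ℂ) + A).det = ((∏ i, (1 + ev i) : ℝ) : ℂ) := by
    rw [hA1, Matrix.det_mul, Matrix.det_mul]
    have h1 : ((U : Matrix (Fin n) (Fin n) ℂ)).det * (star (U : Matrix (Fin n) (Fin n) ℂ)).det
        = 1 := by
      rw [← Matrix.det_mul, hUs, Matrix.det_one]
    have h2 : C.det = ((∏ i, (1 + ev i) : ℝ) : ℂ) := by
      rw [hCdef, Matrix.det_diagonal]; push_cast; ring
    calc ((U : Matrix (Fin n) (Fin n) ℂ)).det * C.det * (star (U : Matrix (Fin n) (Fin n) ℂ)).det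
        = C.det * (((U : Matrix (Fin n) (Fin n) ℂ)).det *
          (star (U : Matrix (Fin n) (Fin n) ℂ)).det) := by ring
      _ = C.det := by rw [h1, mul_one]
      _ = ((∏ i, (1 + ev i) : ℝ) : ℂ) := h2
  have hcomp : (1 : Matrix (Fin ℓ) (Fin ℓ) ℂ) + Qᴴ * A * Q = Wᴴ * C * W := by
    rw [hCsplit, Matrix.mul_add, Matrix.add_mul, Matrix.mul_one, hWW, hspec, hWH, hWdef]
    simp only [Matrix.mul_assoc]
  have hbounds := compression_bounds hℓn ev hanti hnonneg W hWW C hCdef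
  have hgoalA : (((1 : Matrix (Fin n) (Fin n) ℂ) + A).det).re = ∏ i, (1 + ev i) := by
    rw [hdet1, Complex.ofReal_re]
  have hgoalX : (((1 : Matrix (Fin ℓ) (Fin ℓ) ℂ) + Qᴴ * A * Q).det).re
      = ((Wᴴ * C * W).det).re := by rw [hcomp]
  rw [hgoalA, hgoalX]
  exact log_assembly hk hkℓ hℓn ev hnonneg _ hbounds.1 hbounds.2
end
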